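/- Let q ≥ 1 and let a_1,…,a_q, b_1,…,b_q be positive reals satisfying the chain of inequalities e_q(b)/e_q(a) ≥ e_{q-1}(b)/e_{q-1}(a) ≥ ⋯ ≥ e_1(b)/e_1(a) ≥ 1, where e_k denotes the k-th elementary symmetric polynomial. Then for all x ≥ 0, qFq(a;b;x) ≥ e^{f_1 x}, where f_1 = ∏_{i=1}^q a_i/b_i. -/

import Mathlib

open Finset Real MeasureTheory

noncomputable def rise (a : ℝ) (n : ℕ) : ℝ := ∏ k ∈ Finset.range n, (a + k)

noncomputable def esym {q : ℕ} (k : ℕ) (a : Fin q → ℝ) : ℝ :=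
  ∑ s ∈ Finset.powersetCard k (Finset.univ : Finset (Fin q)), ∏ i ∈ s, a i

lemma esym_pos {q : ℕ} (a : Fin q → ℝ) (ha : ∀ i, 0 < a i) {k : ℕ} (hk : k ≤ q) :
    0 < esym k a := by
  apply Finset.sum_pos
  · intro s _; exact Finset.prod_pos fun i _ => ha i
  · exact Finset.powersetCard_nonempty.2 (by simpa using hk)

lemma esym_top {q : ℕ} (a : Fin q → ℝ) : esym q a = ∏ i, a i := by
  unfold esym
  have h : Finset.powersetCard q (Finset.univ : Finset (Fin q)) = {Finset.univ} := by
    simpa using Finset.powersetCard_self (Finset.univ : Finset (Fin q))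
  rw [h, Finset.sum_singleton]

lemma prod_add_const {q : ℕ} (a : Fin q → ℝ) (t : ℝ) :
    ∏ i, (a i + t) = ∑ k ∈ Finset.range (q + 1), esym k a * t ^ (q - k) := by
  rw [Finset.prod_add, Finset.sum_powerset]
  rw [show ((Finset.univ : Finset (Fin q)).card) = q by simp]
  refine Finset.sum_congr rfl fun k _ => ?_
  unfold esym
  rw [Finset.sum_mul]
  refine Finset.sum_congr rfl fun s hs => ?_
  rw [Finset.mem_powersetCard] at hs
  rw [Finset.prod_const, Finset.card_sdiff_of_subset hs.1]
  simp [hs.2]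

theorem stmt2 (q : ℕ) (hq : 1 ≤ q) (a b : Fin q → ℝ)
    (ha : ∀ i, 0 < a i) (hb : ∀ i, 0 < b i)
    (hchain : ∀ i : ℕ, i < q → esym i b / esym i a ≤ esym (i + 1) b / esym (i + 1) a)
    (x : ℝ) (hx : 0 ≤ x) :
    Real.exp ((∏ i, a i / b i) * x)
      ≤ ∑' n : ℕ, (∏ i, rise (a i) n) / (∏ i, rise (b i) n) * x ^ n / (Nat.factorial n) := by
  have hpa : (0:ℝ) < ∏ i, a i := Finset.prod_pos fun i _ => ha i
  have hpb : (0:ℝ) < ∏ i, b i := Finset.prod_pos fun i _ => hb i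
  -- chain extended: esym k b * esym q a ≤ esym k a * esym q b for k ≤ q
  have hmono : ∀ k, k ≤ q → esym k b / esym k a ≤ esym q b / esym q a := by
    have step : ∀ m, m ≤ q → ∀ j, j ≤ m → esym j b / esym j a ≤ esym m b / esym m a := by
      intro m
      induction m with
      | zero => intro _ j hj; interval_cases j; exact le_refl _
      | succ n ih =>
        intro hm j hj
        rcases Nat.lt_or_ge j (n+1) with h | h
        · exact le_trans (ih (le_trans (Nat.le_succ n) hm) j (Nat.lt_succ_iff.mp h))
            (hchain n (by omega))
        · have : j = n + 1 := le_antisymm hj h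
          rw [this]
    intro k hk; exact step q (le_refl q) k hk
  have hkey : ∀ k, k ≤ q → esym k b * esym q a ≤ esym k a * esym q b := by
    intro k hk
    have h1 := esym_pos a ha hk
    have h2 := esym_pos a ha (le_refl q)
    have := hmono k hk
    rw [div_le_div_iff₀ h1 h2] at this
    linarith
  -- R(t) ≥ c for t ≥ 0
  have hR : ∀ t : ℝ, 0 ≤ t →
      (∏ i, a i) * ∏ i, (b i + t) ≤ (∏ i, b i) * ∏ i, (a i + t) := by
    intro t ht
    rw [prod_add_const a t, prod_add_const b t, Finset.mul_sum, Finset.mul_sum]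
    refine Finset.sum_le_sum fun k hk => ?_
    have hk' : k ≤ q := by simpa [Nat.lt_succ_iff] using Finset.mem_range.mp hk
    have := hkey k hk'
    rw [← esym_top a, ← esym_top b]
    have htp : (0:ℝ) ≤ t ^ (q - k) := pow_nonneg ht _
    calc esym q a * (esym k b * t ^ (q - k)) = (esym k b * esym q a) * t ^ (q-k) := by ring
      _ ≤ (esym k a * esym q b) * t ^ (q-k) := by nlinarith
      _ = esym q b * (esym k a * t ^ (q-k)) := by ring
  set c : ℝ := ∏ i, a i / b i with hc
  have hcval : c = (∏ i, a i) / ∏ i, b i := Finset.prod_div_distrib _ _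
  have hcpos : 0 < c := by rw [hcval]; positivity
  -- f_n ≥ c^n and f_n ≤ M^n
  set M : ℝ := ∏ i, max 1 (a i / b i) with hM
  have hM1 : (1:ℝ) ≤ M :=
    calc (1:ℝ) = ∏ _i : Fin q, (1:ℝ) := Finset.prod_const_one.symm
      _ ≤ M := Finset.prod_le_prod (fun i _ => zero_le_one) (fun i _ => le_max_left _ _)
  have hfrac : ∀ n : ℕ,
      (∏ i, rise (a i) n) / (∏ i, rise (b i) n)
        = ∏ k ∈ Finset.range n, ((∏ i, (a i + (k:ℝ))) / ∏ i, (b i + (k:ℝ))) := by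
    intro n
    rw [Finset.prod_div_distrib]
    unfold rise
    rw [Finset.prod_comm, Finset.prod_comm (s := Finset.univ)]
  have hden : ∀ k : ℕ, (0:ℝ) < ∏ i, (b i + (k:ℝ)) :=
    fun k => Finset.prod_pos fun i _ => by have := hb i; positivity
  have hnum : ∀ k : ℕ, (0:ℝ) < ∏ i, (a i + (k:ℝ)) :=
    fun k => Finset.prod_pos fun i _ => by have := ha i; positivity
  have hlow : ∀ n : ℕ, c ^ n ≤ (∏ i, rise (a i) n) / (∏ i, rise (b i) n) := by
    intro n
    rw [hfrac n, show c ^ n = ∏ _k ∈ Finset.range n, c by simp]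
    refine Finset.prod_le_prod (fun k _ => le_of_lt hcpos) (fun k _ => ?_)
    rw [hcval, div_le_div_iff₀ hpb (hden k)]
    rw [mul_comm (∏ i, (a i + (k:ℝ)))]
    exact hR (k:ℝ) (Nat.cast_nonneg k)
  have hup : ∀ n : ℕ, (∏ i, rise (a i) n) / (∏ i, rise (b i) n) ≤ M ^ n := by
    intro n
    rw [hfrac n, show M ^ n = ∏ _k ∈ Finset.range n, M by simp]
    refine Finset.prod_le_prod (fun k _ => le_of_lt (div_pos (hnum k) (hden k)))
      (fun k _ => ?_)
    rw [div_le_iff₀ (hden k), hM, Finset.prod_mul_distrib.symm]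
    refine Finset.prod_le_prod (fun i _ => by have := ha i; positivity) (fun i _ => ?_)
    have hbi := hb i
    rcases le_total (a i) (b i) with h | h
    · calc a i + (k:ℝ) ≤ b i + (k:ℝ) := by linarith
        _ = 1 * (b i + k) := (one_mul _).symm
        _ ≤ max 1 (a i / b i) * (b i + k) := by
            apply mul_le_mul_of_nonneg_right (le_max_left _ _); positivity
    · have h1 : (1:ℝ) ≤ a i / b i := (one_le_div hbi).2 h
      rw [max_eq_right h1]
      rw [mul_add, div_mul_cancel₀ _ (ne_of_gt hbi)]
      have : (k:ℝ) ≤ a i / b i * k :=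
        le_mul_of_one_le_left (Nat.cast_nonneg k) h1
      linarith
  -- summability
  have hterm_nonneg : ∀ n : ℕ,
      (0:ℝ) ≤ (∏ i, rise (a i) n) / (∏ i, rise (b i) n) * x ^ n / (Nat.factorial n) := by
    intro n
    have := lt_of_lt_of_le (pow_pos hcpos n) (hlow n)
    positivity
  have hsum : Summable (fun n : ℕ =>
      (∏ i, rise (a i) n) / (∏ i, rise (b i) n) * x ^ n / (Nat.factorial n)) := by
    refine Summable.of_nonneg_of_le hterm_nonneg (fun n => ?_)
      (Real.summable_pow_div_factorial (M * x))
    rw [mul_pow]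
    have hx' : (0:ℝ) ≤ x ^ n := pow_nonneg hx n
    have hfac : (0:ℝ) ≤ (Nat.factorial n : ℝ) := by positivity
    apply div_le_div_of_nonneg_right _ hfac
    exact mul_le_mul_of_nonneg_right (hup n) hx'
  have hexp : Real.exp (c * x) = ∑' n : ℕ, (c * x) ^ n / (Nat.factorial n) := by
    rw [Real.exp_eq_exp_ℝ, NormedSpace.exp_eq_tsum_div]
  rw [hexp]
  refine Summable.tsum_le_tsum (fun n => ?_) (Real.summable_pow_div_factorial (c*x)) hsum
  rw [mul_pow]
  have hfac : (0:ℝ) ≤ (Nat.factorial n : ℝ) := by positivity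
  apply div_le_div_of_nonneg_right _ hfac
  exact mul_le_mul_of_nonneg_right (hlow n) (pow_nonneg hx n)
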